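/- Let G = (V,E) be a graph on n vertices and define φ : V → ℝ^n by (φ(u))_v = 2 if u = v, (φ(u))_v = 0 if (u,v) ∈ E, and (φ(u))_v = 1 otherwise. Then for all u,v ∈ V: if (u,v) ∈ E then ‖φ(u) − φ(v)‖_∞ ≥ 2, and if u ≠ v with (u,v) ∉ E then ‖φ(u) − φ(v)‖_∞ ≤ 1. -/
import Mathlib


theorem stmt1 (n : ℕ) (G : SimpleGraph (Fin n)) [DecidableRel G.Adj]
    (φ : Fin n → (Fin n → ℝ))
    (hφ : ∀ u v, φ u v = if u = v then 2 else if G.Adj u v then 0 else 1) :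
    ∀ u v, (G.Adj u v → 2 ≤ ‖φ u - φ v‖) ∧
      (u ≠ v → ¬G.Adj u v → ‖φ u - φ v‖ ≤ 1) := by
  intro u v
  constructor
  · intro hadj
    have hne : u ≠ v := G.ne_of_adj hadj
    have h : ‖(φ u - φ v) v‖ ≤ ‖φ u - φ v‖ := norm_le_pi_norm _ v
    have : (φ u - φ v) v = -2 := by
      simp [hφ, hne, hadj]
    rw [this] at h
    simpa using h
  · intro hne hnadj
    rw [pi_norm_le_iff_of_nonneg (by norm_num)]
    intro i
    have h1 : (φ u - φ v) i = φ u i - φ v i := rfl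
    rw [h1, hφ, hφ]
    rcases eq_or_ne u i with rfl | hu
    · have h2 : ¬ G.Adj v u := fun h => hnadj h.symm
      simp [Ne.symm hne, h2]; norm_num
    · rcases eq_or_ne v i with rfl | hv
      · simp [hu, hnadj]; norm_num
      · simp [hu, hv]
        split_ifs with h h' <;> norm_num
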